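/- Every infinite mad family contained in ℬ_T has cardinality exactly the continuum; i.e., 𝔞(ℬ_T) = 𝔠. -/

import Mathlib

open Cardinal Set

/-- The full binary tree `T = 2^{<ω}`, modeled as finite lists of booleans;
`s ≤ t` iff `t` is a prefix of `s` (i.e. `s` extends `t`). -/
abbrev BinTree := List Bool

/-- The restriction `f↾n ∈ 2^{<ω}` of `f ∈ 2^ω`. -/
def restr (f : ℕ → Bool) (n : ℕ) : BinTree := List.ofFn (fun i : Fin n => f i)

/-- The branch `B(f) = { f↾n : n ∈ ω }` induced by `f ∈ 2^ω`. -/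
def branch (f : ℕ → Bool) : Set BinTree := Set.range (restr f)

/-- `⌊X⌋ = { f ∈ 2^ω : |B(f) ∩ X| = ℵ₀ }`. -/
def floorSet (X : Set BinTree) : Set (ℕ → Bool) := {f | (branch f ∩ X).Infinite}

/-- `X` is covered by finitely many branches of `T`. -/
def CoveredByFinitelyManyBranches (X : Set BinTree) : Prop :=
  ∃ s : Finset (ℕ → Bool), X ⊆ ⋃ f ∈ s, branch f

/-- `X` contains no infinite antichain (w.r.t. the prefix/extension order on `T`). -/
def NoInfiniteAntichain (X : Set BinTree) : Prop :=
  ¬ ∃ A ⊆ X, A.Infinite ∧ IsAntichain (· <+: ·) A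

/-- The class `ℬ_T` of infinite subsets of `T` containing no infinite antichain. -/
def Bclass : Set (Set BinTree) := { X | X.Infinite ∧ NoInfiniteAntichain X }

/-- The class `𝒜_T` of infinite antichains of `T`. -/
def Aclass : Set (Set BinTree) := { X | X.Infinite ∧ IsAntichain (· <+: ·) X }

/-- The class `𝒩𝒟_T` of infinite `X ⊆ T` with `⌊X⌋` nowhere dense in Cantor space. -/
def NDclass : Set (Set BinTree) := { X | X.Infinite ∧ IsNowhereDense (floorSet X) }

/-- `σ` is the standard fair-coin product measure on `2^ω`, characterized as a
probability measure giving each basic clopen set `{ f : f↾ℓ(t) = t }` measure `2^{-ℓ(t)}`. -/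
def IsCantorMeasure (σ : MeasureTheory.Measure (ℕ → Bool)) : Prop :=
  MeasureTheory.IsProbabilityMeasure σ ∧
    ∀ t : BinTree, σ { f | restr f t.length = t } = (2 : ENNReal)⁻¹ ^ t.length

/-- The class `𝒩_T` (w.r.t. a measure `σ` on `2^ω`) of infinite `X ⊆ T` with `σ(⌊X⌋) = 0`. -/
def Nclass (σ : MeasureTheory.Measure (ℕ → Bool)) : Set (Set BinTree) :=
  { X | X.Infinite ∧ σ (floorSet X) = 0 }

/-- Pairwise almost disjoint family of infinite sets. -/
def ADFamily {α : Type*} (F : Set (Set α)) : Prop :=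
  (∀ X ∈ F, X.Infinite) ∧ F.Pairwise fun X Y => (X ∩ Y).Finite

/-- `F` is a maximal almost disjoint family within `𝒳`. -/
def MadIn {α : Type*} (𝒳 F : Set (Set α)) : Prop :=
  F ⊆ 𝒳 ∧ ADFamily F ∧ ∀ Y ∈ 𝒳, ∃ X ∈ F, (Y ∩ X).Infinite

/-- The collection `[α]^{ℵ₀}` of all infinite subsets of `α`. -/
def infSets (α : Type*) : Set (Set α) := { X | X.Infinite }

/-- `𝔞(𝒳)`: the least cardinality of an infinite mad family within `𝒳`. -/
noncomputable def aInv {α : Type*} (𝒳 : Set (Set α)) : Cardinal :=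
  sInf { c : Cardinal | ∃ F, F.Infinite ∧ MadIn 𝒳 F ∧ #F = c }

/-- `cov(ℳ)`: the least number of meager subsets of `2^ω` covering `2^ω`. -/
noncomputable def covMeager : Cardinal :=
  sInf { c : Cardinal | ∃ S : Set (Set (ℕ → Bool)),
    (∀ A ∈ S, IsMeagre A) ∧ ⋃₀ S = Set.univ ∧ #S = c }

/-- `cov(𝒩)`: the least number of `σ`-null subsets of `2^ω` covering `2^ω`. -/
noncomputable def covNull (σ : MeasureTheory.Measure (ℕ → Bool)) : Cardinal :=
  sInf { c : Cardinal | ∃ S : Set (Set (ℕ → Bool)),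
    (∀ A ∈ S, σ A = 0) ∧ ⋃₀ S = Set.univ ∧ #S = c }

/-- `F^⊥`: the family of infinite sets almost disjoint from every member of `F`. -/
def perp {α : Type*} (F : Set (Set α)) : Set (Set α) :=
  { Y | Y.Infinite ∧ ∀ X ∈ F, (Y ∩ X).Finite }

/-- Membership in the ideal `ℐ(G)` generated by `G` together with the finite sets:
`S ⊆* ∪G'` for some finite `G' ⊆ G`. -/
def InIdeal {α : Type*} (G : Set (Set α)) (S : Set α) : Prop :=
  ∃ G' : Finset (Set α), ↑G' ⊆ G ∧ (S \ ⋃₀ ↑G').Finite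

/-- `𝔞⁺(F) = 𝔞(F^⊥)`. -/
noncomputable def aPlus {α : Type*} (F : Set (Set α)) : Cardinal := aInv (perp F)

/-- `B` almost decides `F`: `B^⊥` is exactly the family of infinite members of
the ideal generated by `F \ B` and the finite sets. -/
def AlmostDecides {α : Type*} (B F : Set (Set α)) : Prop :=
  perp B = { Y | Y.Infinite ∧ InIdeal (F \ B) Y }

/-- A subset `C` of a poset is centered: every finite subset of `C` has a common
lower bound. -/
def Centered {P : Type*} [Preorder P] (C : Set P) : Prop :=
  ∀ s : Finset P, ↑s ⊆ C → ∃ p, ∀ q ∈ s, p ≤ q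

/-- A poset is σ-centered: it is a countable union of centered subsets. -/
def SigmaCentered (P : Type*) [Preorder P] : Prop :=
  ∃ C : ℕ → Set P, (∀ n, Centered (C n)) ∧ ⋃ n, C n = Set.univ

/-- `D` is dense (below every condition) in the poset `P`. -/
def DenseBelow {P : Type*} [Preorder P] (D : Set P) : Prop :=
  ∀ p : P, ∃ q ∈ D, q ≤ p

/-- `G` is a filter on the poset `P`. -/
def IsFilterOn {P : Type*} [Preorder P] (G : Set P) : Prop :=
  (∀ p ∈ G, ∀ q, p ≤ q → q ∈ G) ∧ ∀ p ∈ G, ∀ q ∈ G, ∃ r ∈ G, r ≤ p ∧ r ≤ q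

/-- Martin's axiom for σ-centered posets: for every nonempty σ-centered poset and
fewer than continuum many dense sets there is a filter meeting them all. -/
def MASigmaCentered : Prop :=
  ∀ (P : Type) (_ : Preorder P) (_ : Nonempty P), SigmaCentered P →
    ∀ 𝒟 : Set (Set P), #𝒟 < Cardinal.continuum → (∀ D ∈ 𝒟, DenseBelow D) →
      ∃ G : Set P, IsFilterOn G ∧ ∀ D ∈ 𝒟, (G ∩ D).Nonempty

lemma restr_length (f : ℕ → Bool) (n : ℕ) : (restr f n).length = n := List.length_ofFn

lemma restr_getElem (f : ℕ → Bool) {n i : ℕ} (h : i < (restr f n).length) :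
    (restr f n)[i] = f i := by simp [restr]

lemma restr_succ (f : ℕ → Bool) (n : ℕ) : restr f (n+1) = restr f n ++ [f n] := by
  rw [restr, List.ofFn_succ']
  simp [restr, List.concat_eq_append, Fin.coe_castSucc]

lemma restr_take (f : ℕ → Bool) {n m : ℕ} (h : n ≤ m) : (restr f m).take n = restr f n := by
  apply List.ext_getElem (by simp [restr_length]; omega)
  intro i h1 h2
  rw [List.getElem_take, restr_getElem, restr_getElem]

lemma restr_prefix (f : ℕ → Bool) {n m : ℕ} (h : n ≤ m) : restr f n <+: restr f m := by
  rw [← restr_take f h]; exact List.take_prefix _ _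

lemma eq_restr_of_prefix {f : ℕ → Bool} {x : BinTree} {m : ℕ} (h : x <+: restr f m) :
    x = restr f x.length := by
  have hl : x.length ≤ m := by have := h.length_le; simpa [restr_length] using this
  rw [List.prefix_iff_eq_take] at h
  rw [h, restr_take f hl, restr_length]

lemma restr_injective (f : ℕ → Bool) : Function.Injective (restr f) := by
  intro n m h
  have := congrArg List.length h
  simpa [restr_length] using this

lemma branch_infinite (f : ℕ → Bool) : (branch f).Infinite :=
  Set.infinite_range_of_injective (restr_injective f)

lemma mem_branch_iff {f : ℕ → Bool} {y : BinTree} : y ∈ branch f ↔ y = restr f y.length := by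
  constructor
  · rintro ⟨n, rfl⟩; rw [restr_length]
  · intro h; exact ⟨y.length, h.symm⟩

lemma branch_comparable {f : ℕ → Bool} {y z : BinTree} (hy : y ∈ branch f) (hz : z ∈ branch f) :
    y <+: z ∨ z <+: y := by
  rw [mem_branch_iff] at hy hz
  rcases Nat.le_or_le y.length z.length with h | h
  · left; rw [hy, hz]; exact restr_prefix f h
  · right; rw [hy, hz]; exact restr_prefix f h

lemma restr_eq_restr_iff {f g : ℕ → Bool} {n : ℕ} :
    restr f n = restr g n ↔ ∀ i < n, f i = g i := by
  constructor
  · intro h i hi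
    have := congrArg (fun l => l.getD i false) h
    simpa [restr, List.getD_eq_getElem?_getD, List.getElem?_ofFn, hi] using this
  · intro h
    apply List.ext_getElem (by simp [restr_length])
    intro i h1 h2
    rw [restr_getElem, restr_getElem]
    exact h i (by simpa [restr_length] using h1)

lemma branch_inter_finite {f g : ℕ → Bool} (h : f ≠ g) : (branch f ∩ branch g).Finite := by
  obtain ⟨d, hd⟩ : ∃ d, f d ≠ g d := by
    by_contra hc; push_neg at hc; exact h (funext hc)
  apply Set.Finite.subset ((Set.finite_Iic d).image (restr f))
  rintro y ⟨hy1, hy2⟩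
  rw [mem_branch_iff] at hy1 hy2
  refine ⟨y.length, ?_, hy1.symm⟩
  simp only [Set.mem_Iic]
  by_contra hc
  push_neg at hc
  have : restr f y.length = restr g y.length := hy1 ▸ hy2
  exact hd (restr_eq_restr_iff.mp this d hc)

lemma branch_injective : Function.Injective branch := by
  intro f g h
  funext d
  have h1 : restr f (d+1) ∈ branch g := h ▸ ⟨d+1, rfl⟩
  rw [mem_branch_iff, restr_length] at h1
  exact restr_eq_restr_iff.mp h1 d (Nat.lt_succ_self d)

lemma exists_long {X : Set BinTree} (h : X.Infinite) (m : ℕ) : ∃ x ∈ X, m < x.length := by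
  by_contra hc
  push_neg at hc
  exact h (Set.Finite.subset (List.finite_length_le Bool m) hc)

/-- generic construction of a branch through a "tree" of conditions -/

lemma exists_branch_thru (Q : BinTree → Prop)
    (hsplit : ∀ t, Q t → Q (t ++ [true]) ∨ Q (t ++ [false])) (t₀ : BinTree) (h₀ : Q t₀) :
    ∃ g : ℕ → Bool, restr g t₀.length = t₀ ∧ ∀ n, t₀.length ≤ n → Q (restr g n) := by
  classical
  let step : BinTree → BinTree := fun t => if Q (t ++ [true]) then t ++ [true] else t ++ [false]
  have hstep : ∀ t, Q t → Q (step t) ∧ ∃ b, step t = t ++ [b] := by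
    intro t ht
    rcases hsplit t ht with h | h
    · simp only [step, if_pos h]; exact ⟨h, true, rfl⟩
    · by_cases h' : Q (t ++ [true])
      · simp only [step, if_pos h']; exact ⟨h', true, rfl⟩
      · simp only [step, if_neg h']; exact ⟨h, false, rfl⟩
  let u : ℕ → BinTree := fun n => step^[n] t₀
  have hu0 : u 0 = t₀ := rfl
  have husucc : ∀ n, u (n+1) = step (u n) := fun n => Function.iterate_succ_apply' step n t₀
  have hQu : ∀ n, Q (u n) := by
    intro n; induction n with
    | zero => exact h₀
    | succ n ih => rw [husucc]; exact (hstep _ ih).1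
  have hulen : ∀ n, (u n).length = t₀.length + n := by
    intro n; induction n with
    | zero => rfl
    | succ n ih =>
      rw [husucc]
      obtain ⟨b, hb⟩ := (hstep _ (hQu n)).2
      rw [hb]; simp [ih]; omega
  have hupfx : ∀ n m, n ≤ m → u n <+: u m := by
    intro n m h
    induction m with
    | zero => have : n = 0 := by omega
              subst this; exact List.prefix_refl _
    | succ m ih =>
      rcases Nat.lt_or_ge n (m+1) with h' | h'
      · have h2 := ih (by omega)
        rw [husucc]
        obtain ⟨b, hb⟩ := (hstep _ (hQu m)).2
        rw [hb]
        exact h2.trans (List.prefix_append _ _)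
      · have : n = m + 1 := by omega
        subst this; exact List.prefix_refl _
  set g : ℕ → Bool := fun k => (u (k+1)).getD k false with hg
  have hkulen : ∀ k, k < (u (k+1)).length := by
    intro k; rw [hulen]; omega
  have hgeq : ∀ k, g k = (u (k+1))[k]'(hkulen k) := by
    intro k; exact List.getD_eq_getElem _ _ (hkulen k)
  have hgval : ∀ n k (hk : k < (u n).length), (u n)[k] = g k := by
    intro n k hk
    rw [hgeq k]
    rcases Nat.le_or_le n (k+1) with h | h
    · exact (hupfx n (k+1) h).getElem hk
    · exact ((hupfx (k+1) n h).getElem (hkulen k)).symm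
  have hrestr : ∀ n, restr g (t₀.length + n) = u n := by
    intro n
    apply List.ext_getElem (by rw [restr_length, hulen])
    intro i h1 h2
    rw [restr_getElem, hgval n i h2]
  refine ⟨g, ?_, ?_⟩
  · have := hrestr 0
    simpa [hu0] using this
  · intro n hn
    have : n = t₀.length + (n - t₀.length) := by omega
    rw [this, hrestr]
    exact hQu _

lemma prefix_step {t x : BinTree} (h : t <+: x) (hne : x ≠ t) : ∃ b, t ++ [b] <+: x := by
  obtain ⟨r, hr⟩ := h
  match r with
  | [] => exact absurd (by simpa using hr.symm) hne
  | b :: r' => exact ⟨b, ⟨r', by simpa using hr⟩⟩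

lemma incomp_of {x t y : BinTree} (hxt1 : ¬ x <+: t) (hxt2 : ¬ t <+: x) (hty : t <+: y) :
    ¬ x <+: y ∧ ¬ y <+: x := by
  constructor
  · intro h
    rcases List.prefix_or_prefix_of_prefix h hty with h' | h'
    · exact hxt1 h'
    · exact hxt2 h'
  · intro h; exact hxt2 (hty.trans h)

lemma prefix_getD {l₁ l₂ : BinTree} (h : l₁ <+: l₂) {k : ℕ} (hk : k < l₁.length) :
    l₁.getD k false = l₂.getD k false := by
  rw [List.getD_eq_getElem _ _ hk, List.getD_eq_getElem _ _ (lt_of_lt_of_le hk h.length_le)]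
  exact h.getElem hk

lemma restr_getD {f : ℕ → Bool} {n k : ℕ} (hk : k < n) : (restr f n).getD k false = f k := by
  rw [List.getD_eq_getElem _ _ (by rw [restr_length]; exact hk), restr_getElem]

/-- L9 : every infinite set with no infinite antichain meets some branch infinitely -/

lemma exists_floor_branch {X : Set BinTree} (hX1 : X.Infinite) (hX2 : NoInfiniteAntichain X) :
    ∃ f, (branch f ∩ X).Infinite := by
  classical
  by_contra hfin
  push_neg at hfin
  set Q : BinTree → Prop := fun t => {x ∈ X | t <+: x}.Infinite with hQdef
  have hQnil : Q [] := by
    have : {x ∈ X | [] <+: x} = X := by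
      ext x; simp [List.nil_prefix]
    rw [hQdef]; simpa [this]
  have hsplit : ∀ t, Q t → Q (t ++ [true]) ∨ Q (t ++ [false]) := by
    intro t ht
    by_contra hc
    push_neg at hc
    simp only [hQdef, Set.not_infinite] at hc
    apply ht
    have hsub : {x ∈ X | t <+: x} ⊆
        ({t} : Set BinTree) ∪ ({x ∈ X | t ++ [true] <+: x} ∪ {x ∈ X | t ++ [false] <+: x}) := by
      rintro x ⟨hx1, hx2⟩
      by_cases hxe : x = t
      · exact Or.inl (by simp [hxe])
      · obtain ⟨b, hb⟩ := prefix_step hx2 hxe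
        cases b
        · exact Or.inr (Or.inr ⟨hx1, hb⟩)
        · exact Or.inr (Or.inl ⟨hx1, hb⟩)
    exact Set.Finite.subset (((Set.finite_singleton t).union (hc.1.union hc.2))) hsub
  -- step lemma
  have step : ∀ t, Q t → ∃ x t', x ∈ X ∧ Q t' ∧ t <+: x ∧ t <+: t' ∧ ¬(x <+: t') ∧ ¬(t' <+: x) := by
    intro t ht
    obtain ⟨g, hg0, hgQ⟩ := exists_branch_thru Q hsplit t ht
    obtain ⟨M, hM⟩ : ∃ M, ∀ y ∈ branch g ∩ X, y.length ≤ M := by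
      obtain ⟨M, hM⟩ := ((hfin g).image List.length).bddAbove
      exact ⟨M, fun y hy => hM (Set.mem_image_of_mem _ hy)⟩
    set m : ℕ := max t.length M + 1 with hm
    have hQm : Q (restr g m) := hgQ m (by omega)
    obtain ⟨x, hx, hxlen⟩ := exists_long hQm m
    obtain ⟨hxX, hxpfx⟩ := hx
    have hxnb : x ∉ branch g := by
      intro hb
      have := hM x ⟨hb, hxX⟩
      omega
    refine ⟨x, restr g (x.length + 1), hxX, hgQ _ (by omega), ?_, ?_, ?_, ?_⟩
    · calc t = restr g t.length := hg0.symm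
        _ <+: restr g m := restr_prefix g (by omega)
        _ <+: x := hxpfx
    · rw [← hg0]; exact restr_prefix g (by omega)
    · intro h
      exact hxnb (mem_branch_iff.mpr (eq_restr_of_prefix h))
    · intro h
      have := h.length_le
      rw [restr_length] at this
      omega
  -- build the antichain
  choose! xf tf hxX htQ hpx hpt hni1 hni2 using step
  set seq : ℕ → BinTree := fun n => tf^[n] [] with hseq
  have hseqsucc : ∀ n, seq (n+1) = tf (seq n) := fun n => Function.iterate_succ_apply' tf n []
  have hseqQ : ∀ n, Q (seq n) := by
    intro n; induction n with
    | zero => exact hQnil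
    | succ n ih => rw [hseqsucc]; exact htQ _ ih
  have hseqmono : ∀ n m, n ≤ m → seq n <+: seq m := by
    intro n m h
    induction m with
    | zero => have : n = 0 := by omega
              subst this; exact List.prefix_refl _
    | succ m ih =>
      rcases Nat.lt_or_ge n (m+1) with h' | h'
      · rw [hseqsucc]; exact (ih (by omega)).trans (hpt _ (hseqQ m))
      · have : n = m + 1 := by omega
        subst this; exact List.prefix_refl _
  set a : ℕ → BinTree := fun n => xf (seq n) with ha
  have haX : ∀ n, a n ∈ X := fun n => hxX _ (hseqQ n)
  have key : ∀ m n, m < n → ¬ a m <+: a n ∧ ¬ a n <+: a m := by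
    intro m n hmn
    have h1 : seq (m+1) <+: a n := by
      have := hseqmono (m+1) n (by omega)
      exact this.trans (hpx _ (hseqQ n))
    have h2 : ¬ a m <+: seq (m+1) := by rw [hseqsucc]; exact hni1 _ (hseqQ m)
    have h3 : ¬ seq (m+1) <+: a m := by rw [hseqsucc]; exact hni2 _ (hseqQ m)
    exact incomp_of h2 h3 h1
  have hainj : Function.Injective a := by
    intro m n h
    by_contra hne
    rcases Nat.lt_or_ge m n with h' | h'
    · exact (key m n h').1 (h ▸ List.prefix_refl _)
    · exact (key n m (by omega)).1 (h ▸ List.prefix_refl _)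
  apply hX2
  refine ⟨Set.range a, ?_, Set.infinite_range_of_injective hainj, ?_⟩
  · rintro y ⟨n, rfl⟩; exact haX n
  · rintro y ⟨m, rfl⟩ z ⟨n, rfl⟩ hne
    rcases Nat.lt_or_ge m n with h' | h'
    · exact (key m n h').1
    · have h'' : n < m := by
        rcases Nat.lt_or_ge n m with h | h
        · exact h
        · exact absurd (by omega : m = n) (fun e => hne (by rw [e]))
      exact (key n m h'').2

/-- L10 : floorSet of a set with no infinite antichain is finite -/

lemma floorSet_finite {X : Set BinTree} (hX2 : NoInfiniteAntichain X) :
    (floorSet X).Finite := by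
  classical
  by_contra hinf
  rw [← Set.not_infinite, not_not] at hinf
  set Q : BinTree → Prop := fun t => {f ∈ floorSet X | restr f t.length = t}.Infinite with hQdef
  have hQnil : Q [] := hinf.mono (fun f hf => ⟨hf, by simp [restr]⟩)
  have hsplit : ∀ t, Q t → Q (t ++ [true]) ∨ Q (t ++ [false]) := by
    intro t ht
    by_contra hc
    push_neg at hc
    simp only [hQdef, Set.not_infinite] at hc
    apply ht
    have hsub : {f ∈ floorSet X | restr f t.length = t} ⊆
        {f ∈ floorSet X | restr f (t ++ [true]).length = t ++ [true]} ∪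
        {f ∈ floorSet X | restr f (t ++ [false]).length = t ++ [false]} := by
      rintro f ⟨hf1, hf2⟩
      have hr : restr f (t.length + 1) = t ++ [f t.length] := by
        rw [restr_succ, hf2]
      cases hb : f t.length
      · right; refine ⟨hf1, ?_⟩
        rw [List.length_append, List.length_singleton, hr, hb]
      · left; refine ⟨hf1, ?_⟩
        rw [List.length_append, List.length_singleton, hr, hb]
    exact Set.Finite.subset (hc.1.union hc.2) hsub
  obtain ⟨g, _, hgQ⟩ := exists_branch_thru Q hsplit [] hQnil
  have hgQ' : ∀ L, Q (restr g L) := fun L => hgQ L (by simp)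
  -- step B
  have stepB : ∀ L, ∃ x, x ∈ X ∧ restr g L <+: x ∧
      ∃ d, L ≤ d ∧ d < x.length ∧ x.getD d false ≠ g d := by
    intro L
    have hQL := hgQ' L
    rw [hQdef] at hQL
    obtain ⟨f', hf', hf'ne⟩ : ∃ f', f' ∈ {f ∈ floorSet X | restr f (restr g L).length = restr g L}
        ∧ f' ≠ g := by
      obtain ⟨f', hf'⟩ := (hQL.diff (Set.finite_singleton g)).nonempty
      exact ⟨f', hf'.1, by simpa using hf'.2⟩
    obtain ⟨hf'floor, hf'r⟩ := hf'
    rw [restr_length] at hf'r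
    obtain ⟨d, hd⟩ : ∃ d, f' d ≠ g d := by
      by_contra h; push_neg at h; exact hf'ne (funext h)
    have hdL : L ≤ d := by
      by_contra h
      push_neg at h
      exact hd (restr_eq_restr_iff.mp hf'r d h)
    obtain ⟨y, hy, hylen⟩ := exists_long hf'floor d
    obtain ⟨hyb, hyX⟩ := hy
    rw [mem_branch_iff] at hyb
    refine ⟨y, hyX, ?_, d, hdL, hylen, ?_⟩
    · rw [hyb, ← hf'r]
      exact restr_prefix f' (by omega)
    · rw [hyb, restr_getD hylen]
      exact hd
  choose! xf hxX hxpfx df hdL hdlen hdne using stepB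
  set Ls : ℕ → ℕ := fun n => (fun L => (xf L).length)^[n] 0 with hLs
  have hLsucc : ∀ n, Ls (n+1) = (xf (Ls n)).length :=
    fun n => Function.iterate_succ_apply' _ n 0
  have hLmono : ∀ n, Ls n < Ls (n+1) := by
    intro n
    rw [hLsucc]
    exact lt_of_le_of_lt (hdL (Ls n)) (hdlen (Ls n))
  have hLmono' : ∀ m n, m < n → Ls m < Ls n := by
    intro m n h
    induction n with
    | zero => omega
    | succ n ih =>
      rcases Nat.lt_or_ge m n with h' | h'
      · exact lt_trans (ih h') (hLmono n)
      · have hmn2 : m = n := by omega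
        rw [hmn2]; exact hLmono n
  set a : ℕ → BinTree := fun n => xf (Ls n) with ha
  have key : ∀ m n, m < n → ¬ a m <+: a n ∧ ¬ a n <+: a m := by
    intro m n hmn
    have hlen_mn : (a m).length ≤ Ls n := by
      have h1 : Ls (m+1) ≤ Ls n := by
        rcases Nat.lt_or_ge (m+1) n with h | h
        · exact le_of_lt (hLmono' _ _ h)
        · have : m + 1 = n := by omega
          subst this; exact le_refl _
      rw [← hLsucc]; exact h1
    have hlen_n : Ls n < (a n).length := by
      rw [ha]; exact lt_of_le_of_lt (hdL (Ls n)) (hdlen (Ls n))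
    constructor
    · intro h
      have hd1 : Ls m ≤ df (Ls m) := hdL _
      have hd2 : df (Ls m) < (a m).length := hdlen _
      apply hdne (Ls m)
      have e1 : (a m).getD (df (Ls m)) false = (a n).getD (df (Ls m)) false :=
        prefix_getD h hd2
      have e2 : (a n).getD (df (Ls m)) false = g (df (Ls m)) := by
        have hp : restr g (Ls n) <+: a n := hxpfx _
        have hdn : df (Ls m) < Ls n := by omega
        rw [← prefix_getD hp (by rw [restr_length]; exact hdn)]
        exact restr_getD hdn
      exact e1.trans e2
    · intro h
      have := h.length_le
      omega
  have hainj : Function.Injective a := by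
    intro m n h
    by_contra hne
    rcases Nat.lt_or_ge m n with h' | h'
    · exact (key m n h').1 (h ▸ List.prefix_refl _)
    · exact (key n m (by omega)).1 (h ▸ List.prefix_refl _)
  apply hX2
  refine ⟨Set.range a, ?_, Set.infinite_range_of_injective hainj, ?_⟩
  · rintro y ⟨n, rfl⟩; exact hxX _
  · rintro y ⟨m, rfl⟩ z ⟨n, rfl⟩ hne
    rcases Nat.lt_or_ge m n with h' | h'
    · exact (key m n h').1
    · have h'' : n < m := by
        rcases Nat.lt_or_ge n m with h | h
        · exact h
        · exact absurd (by omega : m = n) (fun e => hne (by rw [e]))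
      exact (key n m h'').2

open Cardinal in

lemma mk_cantor' : #(ℕ → Bool) = Cardinal.continuum := by
  rw [Cardinal.mk_arrow, Cardinal.mk_bool, Cardinal.mk_nat]
  simp [Cardinal.two_power_aleph0]

lemma branch_mem_Bclass (f : ℕ → Bool) : branch f ∈ Bclass := by
  refine ⟨branch_infinite f, ?_⟩
  rintro ⟨A, hAsub, hAinf, hAanti⟩
  obtain ⟨a, ha, b, hb, hne⟩ := hAinf.nontrivial
  rcases branch_comparable (hAsub ha) (hAsub hb) with h | h
  · exact hAanti ha hb hne h
  · exact hAanti hb ha (Ne.symm hne) h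

lemma mk_range_branch : #(Set.range branch) = Cardinal.continuum := by
  rw [Cardinal.mk_range_eq branch branch_injective, mk_cantor']

lemma range_branch_infinite : (Set.range branch).Infinite := by
  rw [← Set.infinite_coe_iff]
  exact Cardinal.infinite_iff.mpr (by rw [mk_range_branch]; exact Cardinal.aleph0_le_continuum)

lemma madIn_range_branch : MadIn Bclass (Set.range branch) := by
  refine ⟨?_, ⟨?_, ?_⟩, ?_⟩
  · rintro X ⟨f, rfl⟩; exact branch_mem_Bclass f
  · rintro X ⟨f, rfl⟩; exact branch_infinite f
  · rintro X ⟨f, rfl⟩ Y ⟨g, rfl⟩ hne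
    exact branch_inter_finite (fun h => hne (by rw [h]))
  · rintro Y ⟨hY1, hY2⟩
    obtain ⟨f, hf⟩ := exists_floor_branch hY1 hY2
    exact ⟨branch f, ⟨f, rfl⟩, by rwa [Set.inter_comm]⟩

lemma mad_card {F : Set (Set BinTree)} (hFinf : F.Infinite) (hmad : MadIn Bclass F) :
    #F = Cardinal.continuum := by
  obtain ⟨hsub, _, hmax⟩ := hmad
  haveI := hFinf.to_subtype
  have hle : #F ≤ Cardinal.continuum := by
    calc #F ≤ #(Set BinTree) := Cardinal.mk_set_le F
      _ = 2 ^ #BinTree := Cardinal.mk_set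
      _ = 2 ^ ℵ₀ := by rw [Cardinal.mk_eq_aleph0 BinTree]
      _ = Cardinal.continuum := Cardinal.two_power_aleph0
  have hge : Cardinal.continuum ≤ #F := by
    have hcov : ⋃ X ∈ F, floorSet X = Set.univ := by
      apply Set.eq_univ_of_forall
      intro f
      obtain ⟨X, hXF, hXinf⟩ := hmax (branch f) (branch_mem_Bclass f)
      exact Set.mem_biUnion hXF hXinf
    have h2 : (⨆ X : F, #(floorSet X.1)) ≤ ℵ₀ := by
      apply ciSup_le'
      intro X
      exact le_of_lt (floorSet_finite (hsub X.2).2).lt_aleph0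
    calc Cardinal.continuum = #(ℕ → Bool) := mk_cantor'.symm
      _ = #(Set.univ : Set (ℕ → Bool)) := Cardinal.mk_univ.symm
      _ = #(⋃ X ∈ F, floorSet X) := by rw [hcov]
      _ ≤ #F * ⨆ X : F, #(floorSet X.1) := Cardinal.mk_biUnion_le floorSet F
      _ ≤ #F * ℵ₀ := mul_le_mul_right h2 _
      _ = #F := Cardinal.mul_eq_left (Cardinal.aleph0_le_mk F) (Cardinal.aleph0_le_mk F) Cardinal.aleph0_ne_zero
  exact le_antisymm hle hge

/-- Every infinite mad family within `ℬ_T` has cardinality exactly the continuum;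
i.e. `𝔞(ℬ_T) = 𝔠`. -/
theorem stmt3 :
    (∀ F : Set (Set BinTree), F.Infinite → MadIn Bclass F → #F = Cardinal.continuum) ∧
    aInv Bclass = Cardinal.continuum := by
  refine ⟨fun F h1 h2 => mad_card h1 h2, ?_⟩
  have hset : { c : Cardinal | ∃ F, F.Infinite ∧ MadIn Bclass F ∧ #F = c } =
      {Cardinal.continuum} := by
    ext c
    simp only [Set.mem_setOf_eq, Set.mem_singleton_iff]
    constructor
    · rintro ⟨F, h1, h2, rfl⟩
      exact mad_card h1 h2
    · rintro rfl
      exact ⟨Set.range branch, range_branch_infinite, madIn_range_branch, mk_range_branch⟩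
  rw [aInv, hset, csInf_singleton]
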